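/- For a bounded linear operator A on a complex Hilbert space, ‖A*A − AA*‖ ≤ ‖A‖². -/

import Mathlib

open ContinuousLinearMap

open scoped InnerProductSpace ComplexConjugate

private lemma key_bound {H : Type*} [NormedAddCommGroup H] [InnerProductSpace ℂ H]
    [CompleteSpace H] (T : H →L[ℂ] H) (hT : IsSelfAdjoint T) {C : ℝ} (hC : 0 ≤ C)
    (h : ∀ x : H, |Complex.re ⟪T x, x⟫_ℂ| ≤ C * ‖x‖ ^ 2) : ‖T‖ ≤ C := by
  have hsym : ∀ x y : H, ⟪T x, y⟫_ℂ = ⟪x, T y⟫_ℂ :=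
    ContinuousLinearMap.isSelfAdjoint_iff_isSymmetric.mp hT
  -- polarization-type bound: re ⟪T x, y⟫ ≤ C/2 (‖x‖² + ‖y‖²)
  have hpol : ∀ x y : H, Complex.re ⟪T x, y⟫_ℂ ≤ C / 2 * (‖x‖ ^ 2 + ‖y‖ ^ 2) := by
    intro x y
    have h1 : Complex.re ⟪T (x + y), x + y⟫_ℂ - Complex.re ⟪T (x - y), x - y⟫_ℂ
        = 4 * Complex.re ⟪T x, y⟫_ℂ := by
      have hyx : Complex.re ⟪T y, x⟫_ℂ = Complex.re ⟪T x, y⟫_ℂ := by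
        rw [hsym y x]
        simpa using inner_re_symm (𝕜 := ℂ) y (T x)
      simp only [map_add, map_sub, inner_add_left, inner_add_right, inner_sub_left,
        inner_sub_right, map_sub, Complex.add_re, Complex.sub_re]
      linarith
    have h2 := h (x + y)
    have h3 := h (x - y)
    have h4 : Complex.re ⟪T (x + y), x + y⟫_ℂ ≤ C * ‖x + y‖ ^ 2 :=
      le_trans (le_abs_self _) h2
    have h5 : -(C * ‖x - y‖ ^ 2) ≤ Complex.re ⟪T (x - y), x - y⟫_ℂ :=
      neg_le_of_abs_le h3
    have hpar : ‖x + y‖ ^ 2 + ‖x - y‖ ^ 2 = 2 * (‖x‖ ^ 2 + ‖y‖ ^ 2) := by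
      have := parallelogram_law_with_norm ℂ x y
      ring_nf
      ring_nf at this
      linarith
    nlinarith [norm_nonneg (x + y), norm_nonneg (x - y)]
  refine ContinuousLinearMap.opNorm_le_bound T hC fun x => ?_
  rcases eq_or_ne (T x) 0 with h0 | h0
  · simp [h0, mul_nonneg hC (norm_nonneg x)]
  · have hTx : (0:ℝ) < ‖T x‖ := norm_pos_iff.mpr h0
    set y : H := (↑(‖x‖ / ‖T x‖) : ℂ) • T x with hy
    have hny : ‖y‖ = ‖x‖ := by
      rw [hy, norm_smul]
      simp [abs_of_nonneg (div_nonneg (norm_nonneg x) (norm_nonneg (T x))),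
        div_mul_eq_mul_div, mul_div_assoc, div_self hTx.ne']
    have hre : Complex.re ⟪T x, y⟫_ℂ = ‖x‖ * ‖T x‖ := by
      have hb : (⟪T x, T x⟫_ℂ).re = ‖T x‖ ^ 2 := by
        rw [inner_self_eq_norm_sq_to_K]; norm_cast
      have him : (⟪T x, T x⟫_ℂ).im = 0 := by
        exact inner_self_im (𝕜 := ℂ) (T x)
      rw [hy, inner_smul_right, Complex.mul_re, Complex.ofReal_re, Complex.ofReal_im, hb, him]
      field_simp
      ring
    have := hpol x y
    rw [hre, hny] at this
    -- ‖x‖ * ‖T x‖ ≤ C / 2 * (2 ‖x‖²) = C ‖x‖²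
    have hb : ‖x‖ * ‖T x‖ ≤ C * ‖x‖ ^ 2 := by nlinarith
    rcases eq_or_lt_of_le (norm_nonneg x) with hx0 | hx0
    · have : T x = 0 := by
        have : x = 0 := by simpa using hx0.symm
        simp [this]
      exact absurd this h0
    · have := (mul_le_mul_iff_of_pos_left hx0).mp (by nlinarith : ‖x‖ * ‖T x‖ ≤ ‖x‖ * (C * ‖x‖))
      linarith

theorem stmt2 {H : Type*} [NormedAddCommGroup H] [InnerProductSpace ℂ H] [CompleteSpace H]
    (A : H →L[ℂ] H) :
    ‖adjoint A * A - A * adjoint A‖ ≤ ‖A‖ ^ 2 := by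
  have hsa : IsSelfAdjoint (adjoint A * A - A * adjoint A) := by
    have h1 := IsSelfAdjoint.star_mul_self A
    have h2 := IsSelfAdjoint.mul_star_self A
    rw [ContinuousLinearMap.star_eq_adjoint] at h1 h2
    exact h1.sub h2
  refine key_bound _ hsa (by positivity) fun x => ?_
  have h1 : Complex.re ⟪(adjoint A * A) x, x⟫_ℂ = ‖A x‖ ^ 2 := by
    rw [ContinuousLinearMap.mul_apply, adjoint_inner_left, inner_self_eq_norm_sq_to_K]
    norm_cast
  have h2 : Complex.re ⟪(A * adjoint A) x, x⟫_ℂ = ‖adjoint A x‖ ^ 2 := by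
    rw [ContinuousLinearMap.mul_apply, ← adjoint_inner_right, inner_self_eq_norm_sq_to_K]
    norm_cast
  have hsub : Complex.re ⟪(adjoint A * A - A * adjoint A) x, x⟫_ℂ
      = ‖A x‖ ^ 2 - ‖adjoint A x‖ ^ 2 := by
    rw [ContinuousLinearMap.sub_apply, inner_sub_left, Complex.sub_re, h1, h2]
  rw [hsub]
  have hA : ‖A x‖ ^ 2 ≤ ‖A‖ ^ 2 * ‖x‖ ^ 2 := by
    have := A.le_opNorm x
    nlinarith [norm_nonneg (A x), norm_nonneg x, norm_nonneg A]
  have hA' : ‖adjoint A x‖ ^ 2 ≤ ‖A‖ ^ 2 * ‖x‖ ^ 2 := by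
    have h := (adjoint A).le_opNorm x
    rw [show ‖adjoint A‖ = ‖A‖ from LinearIsometryEquiv.norm_map adjoint A] at h
    nlinarith [norm_nonneg (adjoint A x), norm_nonneg x, norm_nonneg A]
  rw [abs_le]
  constructor <;> nlinarith [sq_nonneg ‖A x‖, sq_nonneg ‖adjoint A x‖]
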